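/- Let p be a prime and n ≥ 1 a natural number. In the polynomial ring 𝔽_p[t₁, t, x₁, …, x_{n+1}], let f = −t − x₁^{n+2} − ⋯ − x_{n+1}^{n+2} + (n+2)·t₁·x₁x₂⋯x_{n+1}. Then the coefficient of the monomial (x₁x₂⋯x_{n+1})^{p−1} in f^{p−1}, regarded as a polynomial in t₁ and t over 𝔽_p, equals ∑_{k=0}^{⌊(p−1)/(n+2)⌋} (((n+2)k)!/(k!)^{n+2}) · t^k · ((n+2)t₁)^{p−1−(n+2)k}, where the natural number ((n+2)k)!/(k!)^{n+2} is reduced modulo p. -/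

import Mathlib

open MvPolynomial

private lemma aux_choose (p : ℕ) (hp : p.Prime) : ∀ M, M ≤ p - 1 → (((p-1).choose M : ℕ) : ZMod p) = (-1)^M := by
  haveI := Fact.mk hp
  intro M
  induction M with
  | zero => simp
  | succ M ih =>
    intro hM
    have hM' : M ≤ p - 1 := by omega
    have hp2 := hp.two_le
    have h1 : ((M : ZMod p) + 1) ≠ 0 := by
      have : (((M+1 : ℕ)) : ZMod p) ≠ 0 := by
        rw [Ne, ZMod.natCast_eq_zero_iff]
        intro h
        have := Nat.le_of_dvd (by omega) h
        omega
      simpa using this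
    apply mul_right_cancel₀ h1
    have key := congrArg (Nat.cast : ℕ → ZMod p) (Nat.choose_succ_right_eq (p-1) M)
    push_cast at key
    have hsub : (((p-1) - M : ℕ) : ZMod p) = -((M : ZMod p)+1) := by
      rw [Nat.cast_sub hM', Nat.cast_sub (by omega : 1 ≤ p), ZMod.natCast_self]
      ring
    rw [key, ih hM']
    rw [hsub, pow_succ]
    ring

private lemma aux_mult (p n k : ℕ) (hp : p.Prime) (hk : (n+2)*k ≤ p - 1) :
    ((Nat.multinomial (Finset.univ : Finset (Fin (n+1) ⊕ Fin 2))
        (Sum.elim (fun _ => k) ![k, p - 1 - (n+2)*k]) : ℕ) : ZMod p)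
      = (-1)^((n+2)*k) * ((((n+2)*k).factorial / (k.factorial)^(n+2) : ℕ) : ZMod p) := by
  classical
  set F : (Fin (n+1) ⊕ Fin 2) → ℕ := Sum.elim (fun _ => k) ![k, p - 1 - (n+2)*k] with hF
  set s : Finset (Fin (n+1) ⊕ Fin 2) := Finset.univ.erase (Sum.inr 1) with hs
  have h1 : (Finset.univ : Finset (Fin (n+1) ⊕ Fin 2)) = insert (Sum.inr 1) s := by
    rw [hs, Finset.insert_erase (Finset.mem_univ _)]
  have hcard : s.card = n + 2 := by
    rw [hs, Finset.card_erase_of_mem (Finset.mem_univ _)]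
    simp
  have hFs : ∀ i ∈ s, F i = k := by
    rintro (i | j) hi
    · rfl
    · have hj : j ≠ 1 := by
        intro h; subst h; exact (Finset.notMem_erase _ _) hi
      fin_cases j
      · rfl
      · exact absurd rfl hj
  have hsum : ∑ i ∈ s, F i = (n+2)*k := by
    rw [Finset.sum_congr rfl hFs, Finset.sum_const, hcard, smul_eq_mul]
  have hprod : ∏ i ∈ s, (F i).factorial = (k.factorial)^(n+2) := by
    rw [Finset.prod_congr rfl (fun i hi => by rw [hFs i hi]), Finset.prod_const, hcard]
  have hmults : Nat.multinomial s F = ((n+2)*k).factorial / (k.factorial)^(n+2) := by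
    rw [Nat.multinomial, hsum, hprod]
  have hF1 : F (Sum.inr 1) = p - 1 - (n+2)*k := rfl
  rw [h1, Nat.multinomial_insert (Finset.notMem_erase _ _), hsum, hF1, hmults]
  have h2 : p - 1 - (n+2)*k + (n+2)*k = p - 1 := Nat.sub_add_cancel hk
  rw [h2, Nat.cast_mul]
  have h3 : (p-1).choose (p - 1 - (n+2)*k) = (p-1).choose ((n+2)*k) := Nat.choose_symm hk
  rw [h3, aux_choose p hp _ hk]

/-- The coefficient of `(x₁⋯x_{n+1})^{p-1}` in `f^{p-1}` for the Dwork family over `𝔽_p[t₁,t]`: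
it equals the Hasse–Witt invariant
`∑_k ((n+2)k)!/(k!)^{n+2} · t^k · ((n+2)t₁)^{p-1-(n+2)k}` reduced modulo `p`. -/
theorem coeff_dwork_pow_zmod (p n : ℕ) (hp : p.Prime) (hn : 1 ≤ n)
    (t₁ t : MvPolynomial (Fin 2) (ZMod p)) (ht₁ : t₁ = X 0) (ht : t = X 1)
    (f : MvPolynomial (Fin (n + 1)) (MvPolynomial (Fin 2) (ZMod p)))
    (hf : f = - C t - (∑ i : Fin (n + 1), (X i) ^ (n + 2))
        + C (((n : MvPolynomial (Fin 2) (ZMod p)) + 2) * t₁) * ∏ i : Fin (n + 1), X i) :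
    MvPolynomial.coeff (Finsupp.equivFunOnFinite.symm fun _ : Fin (n + 1) => p - 1)
        (f ^ (p - 1)) =
      ∑ k ∈ Finset.range ((p - 1) / (n + 2) + 1),
        ((Nat.factorial ((n + 2) * k) / (Nat.factorial k) ^ (n + 2) : ℕ) :
              MvPolynomial (Fin 2) (ZMod p)) *
          t ^ k *
          (((n : MvPolynomial (Fin 2) (ZMod p)) + 2) * t₁) ^ (p - 1 - (n + 2) * k) := by
  haveI := Fact.mk hp
  classical
  set c : MvPolynomial (Fin 2) (ZMod p) := ((n : MvPolynomial (Fin 2) (ZMod p)) + 2) * t₁ with hc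
  set T : Fin (n+1) →₀ ℕ := Finsupp.equivFunOnFinite.symm fun _ : Fin (n+1) => p - 1 with hT
  set g : (Fin (n+1) ⊕ Fin 2) → MvPolynomial (Fin (n+1)) (MvPolynomial (Fin 2) (ZMod p)) :=
    Sum.elim (fun i => -(X i ^ (n+2))) ![-C t, C c * ∏ i, X i] with hg
  have hf' : f = ∑ i, g i := by
    rw [hf, Fintype.sum_sum_type, Fin.sum_univ_two]
    simp only [hg, Sum.elim_inl, Sum.elim_inr, Matrix.cons_val_zero, Matrix.cons_val_one,
      Matrix.head_cons]
    rw [Finset.sum_neg_distrib]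
    ring
  have hXprod : ∀ e : Fin (n+1) → ℕ,
      (∏ i, (X i : MvPolynomial (Fin (n+1)) (MvPolynomial (Fin 2) (ZMod p))) ^ e i)
        = monomial (Finsupp.equivFunOnFinite.symm e) 1 := by
    intro e
    have h1 : (Finsupp.equivFunOnFinite.symm e) = ∑ i, Finsupp.single i (e i) := by
      ext j
      simp [Finsupp.single_apply, Finset.sum_ite_eq']
    rw [h1, monomial_sum_one]
    exact Finset.prod_congr rfl fun i _ => X_pow_eq_monomial
  have hterm : ∀ kf : (Fin (n+1) ⊕ Fin 2) → ℕ,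
      MvPolynomial.coeff T ((Nat.multinomial Finset.univ kf :
          MvPolynomial (Fin (n+1)) (MvPolynomial (Fin 2) (ZMod p))) * ∏ i, g i ^ kf i)
        = if (∀ i : Fin (n+1), (n+2) * kf (Sum.inl i) + kf (Sum.inr 1) = p - 1)
          then (Nat.multinomial Finset.univ kf : MvPolynomial (Fin 2) (ZMod p)) *
            ((-1)^((∑ i, kf (Sum.inl i)) + kf (Sum.inr 0)) *
              (t ^ kf (Sum.inr 0) * c ^ kf (Sum.inr 1)))
          else 0 := by
    intro kf
    have hp1 : (∏ i, g i ^ kf i) =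
        C ((-1)^((∑ i, kf (Sum.inl i)) + kf (Sum.inr 0)) *
            (t ^ kf (Sum.inr 0) * c ^ kf (Sum.inr 1))) *
          monomial (Finsupp.equivFunOnFinite.symm
            fun i => (n+2) * kf (Sum.inl i) + kf (Sum.inr 1)) 1 := by
      rw [← hXprod, Fintype.prod_sum_type, Fin.prod_univ_two]
      simp only [hg, Sum.elim_inl, Sum.elim_inr, Matrix.cons_val_zero, Matrix.cons_val_one,
        Matrix.head_cons]
      have e1 : ∀ i : Fin (n+1), (-(X i ^ (n+2)) :
          MvPolynomial (Fin (n+1)) (MvPolynomial (Fin 2) (ZMod p))) ^ kf (Sum.inl i)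
            = (-1) ^ kf (Sum.inl i) * X i ^ ((n+2) * kf (Sum.inl i)) := by
        intro i; ring
      rw [Finset.prod_congr rfl fun i _ => e1 i, Finset.prod_mul_distrib,
        Finset.prod_pow_eq_pow_sum]
      have e2 : ∀ i : Fin (n+1), (X i :
          MvPolynomial (Fin (n+1)) (MvPolynomial (Fin 2) (ZMod p))) ^
            ((n+2) * kf (Sum.inl i) + kf (Sum.inr 1))
          = X i ^ ((n+2) * kf (Sum.inl i)) * X i ^ kf (Sum.inr 1) := fun i => by ring
      rw [Finset.prod_congr rfl fun i _ => e2 i, Finset.prod_mul_distrib, Finset.prod_pow]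
      simp only [map_mul, map_pow, map_neg, map_one]
      ring
    rw [hp1]
    have hcast : ((Nat.multinomial Finset.univ kf : ℕ) :
        MvPolynomial (Fin (n+1)) (MvPolynomial (Fin 2) (ZMod p)))
        = C ((Nat.multinomial Finset.univ kf : ℕ) : MvPolynomial (Fin 2) (ZMod p)) := by
      simp
    rw [hcast, ← mul_assoc, ← map_mul, MvPolynomial.coeff_C_mul, MvPolynomial.coeff_monomial]
    have hiff : ((Finsupp.equivFunOnFinite.symm
        fun i => (n+2) * kf (Sum.inl i) + kf (Sum.inr 1)) = T)
        ↔ (∀ i : Fin (n+1), (n+2) * kf (Sum.inl i) + kf (Sum.inr 1) = p - 1) := by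
      rw [hT, Finsupp.equivFunOnFinite.symm.injective.eq_iff]
      exact funext_iff
    rw [mul_ite, mul_one, mul_zero]
    simp only [hiff]
  rw [hf', Finset.sum_pow_eq_sum_piAntidiag, MvPolynomial.coeff_sum]
  rw [Finset.sum_congr rfl fun kf _ => hterm kf]
  rw [← Finset.sum_filter]
  have hsum_eq : ∀ kq : (Fin (n+1) ⊕ Fin 2) → ℕ,
      (∑ i, kq i) = (∑ i : Fin (n+1), kq (Sum.inl i)) + (kq (Sum.inr 0) + kq (Sum.inr 1)) := by
    intro kq; rw [Fintype.sum_sum_type, Fin.sum_univ_two]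
  have hleft : ∀ kq ∈ (Finset.piAntidiag Finset.univ (p-1)).filter
      (fun kf => ∀ i : Fin (n+1), (n+2) * kf (Sum.inl i) + kf (Sum.inr 1) = p - 1),
      (Sum.elim (fun _ => kq (Sum.inl 0)) ![kq (Sum.inl 0), p - 1 - (n+2) * kq (Sum.inl 0)] :
        (Fin (n+1) ⊕ Fin 2) → ℕ) = kq := by
    intro kq hmem
    simp only [Finset.mem_filter, Finset.mem_piAntidiag] at hmem
    obtain ⟨⟨hsum, -⟩, hcond⟩ := hmem
    have hall : ∀ i : Fin (n+1), kq (Sum.inl i) = kq (Sum.inl 0) := by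
      intro i
      have h1 := hcond i
      have h2 := hcond 0
      have h3 : (n+2) * kq (Sum.inl i) = (n+2) * kq (Sum.inl 0) := by omega
      exact Nat.eq_of_mul_eq_mul_left (by omega) h3
    rw [hsum_eq] at hsum
    have hconst : (∑ i : Fin (n+1), kq (Sum.inl i)) = (n+1) * kq (Sum.inl 0) := by
      rw [Finset.sum_congr rfl fun i _ => hall i, Finset.sum_const, Finset.card_univ,
        Fintype.card_fin, smul_eq_mul]
    rw [hconst] at hsum
    have h0 := hcond 0
    have hrel : (n+1) * kq (Sum.inl 0) + kq (Sum.inl 0) = (n+2) * kq (Sum.inl 0) := by ring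
    funext x
    rcases x with i | j
    · simp only [Sum.elim_inl]
      exact (hall i).symm
    · fin_cases j
      · simp only [Sum.elim_inr, Fin.zero_eta, Fin.isValue, Matrix.cons_val_zero]
        omega
      · simp only [Sum.elim_inr, Fin.mk_one, Fin.isValue, Matrix.cons_val_one, Matrix.head_cons,
          Matrix.cons_val_zero]
        omega
  refine Finset.sum_nbij' (fun kq => kq (Sum.inl 0))
    (fun kk => Sum.elim (fun _ => kk) ![kk, p - 1 - (n+2)*kk]) ?_ ?_ ?_ ?_ ?_
  · intro kq hmem
    simp only [Finset.mem_filter, Finset.mem_piAntidiag] at hmem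
    have h0 := hmem.2 0
    rw [Finset.mem_range, Nat.lt_succ_iff, Nat.le_div_iff_mul_le (by omega : 0 < n + 2)]
    have hrel : kq (Sum.inl 0) * (n+2) = (n+2) * kq (Sum.inl 0) := by ring
    omega
  · intro kk hkk
    rw [Finset.mem_range, Nat.lt_succ_iff, Nat.le_div_iff_mul_le (by omega : 0 < n + 2)] at hkk
    simp only [Finset.mem_filter, Finset.mem_piAntidiag]
    have hrel1 : kk * (n+2) = (n+2) * kk := by ring
    have hrel2 : (n+1) * kk + kk = (n+2) * kk := by ring
    refine ⟨⟨?_, fun i _ => Finset.mem_univ i⟩, ?_⟩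
    · rw [hsum_eq]
      simp only [Sum.elim_inl, Sum.elim_inr, Matrix.cons_val_zero, Matrix.cons_val_one,
        Matrix.head_cons, Finset.sum_const, Finset.card_univ, Fintype.card_fin, smul_eq_mul]
      omega
    · intro i
      simp only [Sum.elim_inl, Sum.elim_inr, Matrix.cons_val_one, Matrix.head_cons,
        Matrix.cons_val_zero]
      omega
  · exact hleft
  · intro kk _
    rfl
  · intro kq hmem
    obtain ⟨kk, rfl⟩ : ∃ kk, kq = Sum.elim (fun _ => kk) ![kk, p - 1 - (n+2)*kk] :=
      ⟨kq (Sum.inl 0), (hleft kq hmem).symm⟩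
    simp only [Finset.mem_filter, Finset.mem_piAntidiag] at hmem
    have h0 := hmem.2 0
    simp only [Sum.elim_inl, Sum.elim_inr, Matrix.cons_val_zero, Matrix.cons_val_one,
      Matrix.head_cons] at h0 ⊢
    have hM : (n+2) * kk ≤ p - 1 := by omega
    have hconst : (∑ _x : Fin (n+1), kk) = (n+1) * kk := by
      simp only [Finset.sum_const, Finset.card_univ, Fintype.card_fin, smul_eq_mul]
    rw [hconst]
    have hmul : ((Nat.multinomial Finset.univ ((Sum.elim (fun _ => kk)
        ![kk, p - 1 - (n+2)*kk]) : (Fin (n+1) ⊕ Fin 2) → ℕ) : ℕ) : MvPolynomial (Fin 2) (ZMod p))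
        = (-1)^((n+2)*kk) * ((((n+2)*kk).factorial / (kk.factorial)^(n+2) : ℕ) :
            MvPolynomial (Fin 2) (ZMod p)) := by
      have := congrArg (MvPolynomial.C : ZMod p →+* MvPolynomial (Fin 2) (ZMod p))
        (aux_mult p n kk hp hM)
      simpa only [map_natCast, map_mul, map_pow, map_neg, map_one] using this
    rw [hmul]
    have hsign : ((-1 : MvPolynomial (Fin 2) (ZMod p))^((n+2)*kk)) *
        (-1)^((n+1)*kk + kk) = 1 := by
      rw [← pow_add]
      exact Even.neg_one_pow ⟨(n+2)*kk, by ring⟩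
    linear_combination ((((((n+2)*kk).factorial / (kk.factorial)^(n+2) : ℕ) :
      MvPolynomial (Fin 2) (ZMod p))) * (t ^ kk * c ^ (p - 1 - (n+2)*kk))) * hsign
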